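/- arXiv:2504.09084 — 3 statements merged into one kernel-verified Lean document; each statement's English description precedes it below -/
import Mathlib

section
/- Let f₀ be a measure-preserving transformation of a probability space (X, μ), and let ω ∈ ℂ with |ω| = 1. Suppose a, b : X → ℂ are bounded measurable functions such that for every n ∈ ℤ there is a constant C with |b(x) − ωⁿ a(f₀ⁿ(x))| ≤ C/|n| for μ-a.e. x (for n ≠ 0). Then μ-a.e.: b(x) = ω·b(f₀(x)), a(x) = ω·a(f₀(x)), and a(x) = b(x). -/
open MeasureTheory

private lemma ae_comp_iff {X : Type*} [MeasurableSpace X] {μ : Measure X}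
    (e : X ≃ᵐ X) (he : MeasurePreserving e μ μ) (p : X → Prop) :
    (∀ᵐ x ∂μ, p (e x)) ↔ ∀ᵐ x ∂μ, p x := by
  rw [← e.measurableEmbedding.ae_map_iff, he.map_eq]

private lemma ae_iter_iff {X : Type*} [MeasurableSpace X] {μ : Measure X}
    (e : X ≃ᵐ X) (he : MeasurePreserving e μ μ) (p : X → Prop) (n : ℕ) :
    (∀ᵐ x ∂μ, p (e^[n] x)) ↔ ∀ᵐ x ∂μ, p x := by
  induction n with
  | zero => simp
  | succ n ih =>
    have := ae_comp_iff e he (fun x => p (e^[n] x))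
    simp only [← Function.iterate_succ_apply e n] at this
    exact this.trans ih

/-- asymptotic twisted invariance equations.  If `b(x) = ωⁿ a(f₀ⁿ(x)) + O(1/|n|)`
a.e. for all nonzero integers `n`, with `a, b` bounded measurable and `|ω| = 1`, then a.e.
`b = ω·(b ∘ f₀)`, `a = ω·(a ∘ f₀)` and `a = b`. -/
theorem twisted_invariance_equation
    {X : Type*} [MeasurableSpace X] (μ : Measure X) [IsProbabilityMeasure μ]
    (e : X ≃ᵐ X) (he : MeasurePreserving e μ μ)
    (ω : ℂ) (hω : ‖ω‖ = 1)
    (a b : X → ℂ) (ha : Measurable a) (hb : Measurable b)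
    (Ca Cb : ℝ)
    (haB : ∀ᵐ x ∂μ, ‖a x‖ ≤ Ca)
    (hbB : ∀ᵐ x ∂μ, ‖b x‖ ≤ Cb)
    (C : ℝ)
    (hasym : ∀ n : ℤ, n ≠ 0 →
      ∀ᵐ x ∂μ, ‖b x - ω ^ n * a ((e.toEquiv ^ n) x)‖ ≤ C / |(n : ℝ)|) :
    (∀ᵐ x ∂μ, b x = ω * b (e x)) ∧ (∀ᵐ x ∂μ, a x = ω * a (e x)) ∧
      (∀ᵐ x ∂μ, a x = b x) := by
  -- restate the hypothesis using natural-number iterates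
  have hasymN : ∀ n : ℕ, ∀ᵐ x ∂μ,
      ‖b x - ω ^ (n+1:ℕ) * a ((⇑e)^[n+1] x)‖ ≤ C / (n+1 : ℝ) := by
    intro n
    have h := hasym ((n:ℤ)+1) (by positivity)
    have h1 : ((n : ℤ) + 1) = ((n+1 : ℕ) : ℤ) := by push_cast; ring
    rw [h1] at h
    simp only [zpow_natCast] at h
    have h2 : ∀ x : X, (e.toEquiv ^ (n+1:ℕ)) x = (⇑e)^[n+1] x := fun _ => rfl
    have h3 : |(((n+1:ℕ):ℤ) : ℝ)| = (n+1 : ℝ) := by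
      push_cast; rw [abs_of_pos]; positivity
    simp only [h2, h3, show ⇑e.toEquiv = ⇑e from rfl] at h
    exact h
  -- Step 1 : b = ω * b ∘ e a.e.
  have key : ∀ᵐ x ∂μ, ∀ n : ℕ, ‖b x - ω * b (e x)‖ ≤ 2 * C / (n+1 : ℝ) := by
    rw [ae_all_iff]
    intro n
    have h1 := hasymN (n+1)
    have h2 := (ae_comp_iff e he _).2 (hasymN n)
    filter_upwards [h1, h2] with x hx1 hx2
    push_cast at hx1
    have hiter : (⇑e)^[n+1] (e x) = (⇑e)^[n+2] x := by
      rw [Function.iterate_succ_apply]; rfl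
    rw [hiter] at hx2
    have heq : b x - ω * b (e x)
        = (b x - ω ^ (n+2:ℕ) * a ((⇑e)^[n+2] x))
          - ω * (b (e x) - ω ^ (n+1:ℕ) * a ((⇑e)^[n+2] x)) := by
      ring
    rw [heq]
    calc ‖_‖ ≤ ‖b x - ω ^ (n+2:ℕ) * a ((⇑e)^[n+2] x)‖
          + ‖ω * (b (e x) - ω ^ (n+1:ℕ) * a ((⇑e)^[n+2] x))‖ :=
            norm_sub_le _ _
      _ ≤ C / (n+1+1 : ℝ) + 1 * (C / (n+1 : ℝ)) := by
          rw [norm_mul, hω]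
          exact add_le_add hx1 (by simpa using hx2)
      _ ≤ 2 * C / (n+1 : ℝ) := by
          rw [one_mul]
          have hC : 0 ≤ C := by
            rcases (hasymN 0).exists with ⟨x, hx⟩
            have h0 := le_trans (norm_nonneg _) hx
            norm_num at h0
            exact h0
          have : C / (n+1+1 : ℝ) ≤ C / (n+1 : ℝ) := by
            apply div_le_div_of_nonneg_left hC (by positivity) (by linarith)
          rw [two_mul, add_div]
          linarith
  have hbinv : ∀ᵐ x ∂μ, b x = ω * b (e x) := by
    filter_upwards [key] with x hx
    have hz : ‖b x - ω * b (e x)‖ ≤ 0 := by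
      have hlim : Filter.Tendsto (fun n : ℕ => 2 * C / (n+1 : ℝ)) Filter.atTop (nhds 0) :=
        tendsto_const_div_atTop_nhds_zero_nat (2*C) |>.comp
          (Filter.tendsto_add_atTop_nat 1) |>.congr (fun n => by simp only [Function.comp_apply]; push_cast; ring)
      exact ge_of_tendsto' hlim hx
    have := le_antisymm hz (norm_nonneg _)
    have := norm_eq_zero.1 this
    linear_combination this
  -- Step 2 : b = ω^n * b ∘ e^[n] a.e.
  have hbiter : ∀ n : ℕ, ∀ᵐ x ∂μ, b x = ω ^ n * b ((⇑e)^[n] x) := by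
    intro n
    induction n with
    | zero => simp
    | succ n ih =>
      have h2 := (ae_iter_iff e he _ n).2 hbinv
      filter_upwards [ih, h2] with x hx1 hx2
      rw [hx1, hx2, Function.iterate_succ_apply']
      ring
  -- Step 3 : a = b a.e.
  have hab : ∀ᵐ x ∂μ, a x = b x := by
    have hall : ∀ᵐ x ∂μ, ∀ n : ℕ, ‖a x - b x‖ ≤ C / (n+1 : ℝ) := by
      rw [ae_all_iff]
      intro n
      have h1 := hasymN n
      have h2 := hbiter (n+1)
      have h3 : ∀ᵐ x ∂μ, ‖a ((⇑e)^[n+1] x) - b ((⇑e)^[n+1] x)‖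
          ≤ C / (n+1 : ℝ) := by
        filter_upwards [h1, h2] with x hx1 hx2
        rw [hx2] at hx1
        have hωn : ‖ω ^ (n+1:ℕ)‖ = 1 := by rw [norm_pow, hω, one_pow]
        calc ‖a ((⇑e)^[n+1] x) - b ((⇑e)^[n+1] x)‖
            = ‖ω ^ (n+1:ℕ)‖ *
              ‖a ((⇑e)^[n+1] x) - b ((⇑e)^[n+1] x)‖ := by
                rw [hωn, one_mul]
          _ = ‖ω ^ (n+1:ℕ) * b ((⇑e)^[n+1] x)
                - ω ^ (n+1:ℕ) * a ((⇑e)^[n+1] x)‖ := by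
                rw [← norm_mul, ← norm_neg]; ring_nf
          _ ≤ C / (n+1 : ℝ) := hx1
      exact (ae_iter_iff e he (fun y => ‖a y - b y‖ ≤ C / (n+1 : ℝ)) (n+1)).1 h3
    filter_upwards [hall] with x hx
    have hz : ‖a x - b x‖ ≤ 0 := by
      have hlim : Filter.Tendsto (fun n : ℕ => C / (n+1 : ℝ)) Filter.atTop (nhds 0) :=
        tendsto_const_div_atTop_nhds_zero_nat C |>.comp
          (Filter.tendsto_add_atTop_nat 1) |>.congr (fun n => by simp only [Function.comp_apply]; push_cast; ring)
      exact ge_of_tendsto' hlim hx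
    have := le_antisymm hz (norm_nonneg _)
    have := norm_eq_zero.1 this
    linear_combination this
  -- Step 4 : a-invariance
  refine ⟨hbinv, ?_, hab⟩
  have hab' := (ae_comp_iff e he (fun y => a y = b y)).2 hab
  filter_upwards [hbinv, hab, hab'] with x h1 h2 h3
  rw [h2, h3]; exact h1
end

section
/- Let G be a connected Lie group and A an automorphism of G such that 1 is not an eigenvalue of DA. Then for every a ∈ G the affine map f : G → G, f(g) = a·A(g), has a fixed point. -/
open Manifold Filter Set Function Topology

set_option linter.unusedSectionVars false

/-- The manifold derivative of a self-map of `G`, packaged as a continuous linear endomorphism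
of the model space `E` (using that all tangent spaces of `G` are canonically `E`). -/
private noncomputable def TJRD (E : Type*) [NormedAddCommGroup E] [NormedSpace ℝ E]
    {G : Type*} [TopologicalSpace G] [ChartedSpace E G] (f : G → G) (p : G) : E →L[ℝ] E :=
  mfderiv 𝓘(ℝ, E) 𝓘(ℝ, E) f p

section Aux

variable {E : Type*} [NormedAddCommGroup E] [NormedSpace ℝ E] [FiniteDimensional ℝ E]
  {G : Type*} [TopologicalSpace G] [ChartedSpace E G] [Group G] [LieGroup 𝓘(ℝ, E) (⊤ : ℕ∞) G]

private lemma TJRD_eq (f : G → G) (p : G) :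
    TJRD E f p = mfderiv 𝓘(ℝ, E) 𝓘(ℝ, E) f p := rfl

private lemma TJRD_id (p : G) : TJRD E (id : G → G) p = ContinuousLinearMap.id ℝ E :=
  mfderiv_id

private lemma TJRD_const (c p : G) : TJRD E (fun _ : G => c) p = 0 :=
  mfderiv_const

/-- Chain rule in packaged form. -/
private lemma TJRD_comp {f g : G → G} {p : G}
    (hg : MDifferentiableAt 𝓘(ℝ, E) 𝓘(ℝ, E) g (f p))
    (hf : MDifferentiableAt 𝓘(ℝ, E) 𝓘(ℝ, E) f p) :
    TJRD E (g ∘ f) p = (TJRD E g (f p)).comp (TJRD E f p) :=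
  mfderiv_comp p hg hf

/-- Inverse function theorem on the Lie group `G`: if `f` is smooth and its differential at `p`
is a linear equivalence, then the range of `f` is a neighborhood of `f p`. -/
private lemma TJR_range_mem_nhds {f : G → G} (hf : ContMDiff 𝓘(ℝ, E) 𝓘(ℝ, E) (⊤ : ℕ∞) f) (p : G)
    (Z : E ≃L[ℝ] E) (hZ : (Z : E →L[ℝ] E) = TJRD E f p) :
    Set.range f ∈ 𝓝 (f p) := by
  have hmd : MDifferentiableAt 𝓘(ℝ, E) 𝓘(ℝ, E) f p := (hf p).mdifferentiableAt (by simp)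
  have hFd : ContDiffAt ℝ ((⊤ : ℕ∞) : WithTop ℕ∞)
      (↑(extChartAt 𝓘(ℝ, E) (f p)) ∘ f ∘ ↑(extChartAt 𝓘(ℝ, E) p).symm)
      (extChartAt 𝓘(ℝ, E) p p) := by
    have h1 := (contMDiffAt_iff.mp (hf p)).2
    rw [ModelWithCorners.Boundaryless.range_eq_univ, contDiffWithinAt_univ] at h1
    exact h1
  have hfd' : fderiv ℝ (↑(extChartAt 𝓘(ℝ, E) (f p)) ∘ f ∘ ↑(extChartAt 𝓘(ℝ, E) p).symm)
      (extChartAt 𝓘(ℝ, E) p p) = mfderiv 𝓘(ℝ, E) 𝓘(ℝ, E) f p := by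
    rw [hmd.mfderiv, ModelWithCorners.Boundaryless.range_eq_univ, fderivWithin_univ]
    rfl
  have hst : HasStrictFDerivAt
      (↑(extChartAt 𝓘(ℝ, E) (f p)) ∘ f ∘ ↑(extChartAt 𝓘(ℝ, E) p).symm)
      (Z : E →L[ℝ] E) (extChartAt 𝓘(ℝ, E) p p) := by
    have h2 := hFd.hasStrictFDerivAt
      (by simp)
    have hZ' : (Z : E →L[ℝ] E) = mfderiv 𝓘(ℝ, E) 𝓘(ℝ, E) f p := hZ
    rwa [hfd', ← hZ'] at h2
  have hmap : Filter.map (↑(extChartAt 𝓘(ℝ, E) (f p)) ∘ f ∘ ↑(extChartAt 𝓘(ℝ, E) p).symm)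
      (𝓝 (extChartAt 𝓘(ℝ, E) p p)) =
      𝓝 ((↑(extChartAt 𝓘(ℝ, E) (f p)) ∘ f ∘ ↑(extChartAt 𝓘(ℝ, E) p).symm)
        (extChartAt 𝓘(ℝ, E) p p)) := hst.map_nhds_eq_of_equiv
  have hFp : (↑(extChartAt 𝓘(ℝ, E) (f p)) ∘ f ∘ ↑(extChartAt 𝓘(ℝ, E) p).symm)
      (extChartAt 𝓘(ℝ, E) p p) = extChartAt 𝓘(ℝ, E) (f p) (f p) := by
    simp only [Function.comp_apply]
    rw [(extChartAt 𝓘(ℝ, E) p).left_inv (mem_extChartAt_source p)]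
  have hcont : ContinuousAt f p := hmd.continuousAt
  have hψsrc : ∀ᶠ y in 𝓝 p, f y ∈ (extChartAt 𝓘(ℝ, E) (f p)).source :=
    hcont ((isOpen_extChartAt_source (f p)).mem_nhds (mem_extChartAt_source (f p)))
  have heq : ∀ᶠ y in 𝓝 p, (↑(extChartAt 𝓘(ℝ, E) (f p)).symm ∘
      (↑(extChartAt 𝓘(ℝ, E) (f p)) ∘ f ∘ ↑(extChartAt 𝓘(ℝ, E) p).symm) ∘
      ↑(extChartAt 𝓘(ℝ, E) p)) y = f y := by
    filter_upwards [extChartAt_source_mem_nhds (I := 𝓘(ℝ, E)) p, hψsrc] with y hy hfy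
    simp only [Function.comp_apply]
    rw [(extChartAt 𝓘(ℝ, E) p).left_inv hy, (extChartAt 𝓘(ℝ, E) (f p)).left_inv hfy]
  have h1 : Filter.map (extChartAt 𝓘(ℝ, E) p) (𝓝 p) = 𝓝 (extChartAt 𝓘(ℝ, E) p p) :=
    map_extChartAt_nhds_of_boundaryless p
  have h2 : Filter.map (extChartAt 𝓘(ℝ, E) (f p)) (𝓝 (f p)) =
      𝓝 (extChartAt 𝓘(ℝ, E) (f p) (f p)) := map_extChartAt_nhds_of_boundaryless (f p)
  have h3 : Filter.map (↑(extChartAt 𝓘(ℝ, E) (f p)).symm)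
      (𝓝 (extChartAt 𝓘(ℝ, E) (f p) (f p))) = 𝓝 (f p) := by
    rw [← h2, Filter.map_map]
    have hev : (↑(extChartAt 𝓘(ℝ, E) (f p)).symm ∘ ↑(extChartAt 𝓘(ℝ, E) (f p)) : G → G)
        =ᶠ[𝓝 (f p)] id := by
      filter_upwards [extChartAt_source_mem_nhds (I := 𝓘(ℝ, E)) (f p)] with y hy
      exact (extChartAt 𝓘(ℝ, E) (f p)).left_inv hy
    rw [Filter.map_congr hev, Filter.map_id]
  have hfinal : 𝓝 (f p) = Filter.map (↑(extChartAt 𝓘(ℝ, E) (f p)).symm ∘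
      (↑(extChartAt 𝓘(ℝ, E) (f p)) ∘ f ∘ ↑(extChartAt 𝓘(ℝ, E) p).symm) ∘
      ↑(extChartAt 𝓘(ℝ, E) p)) (𝓝 p) := by
    rw [← Filter.map_map, ← Filter.map_map, h1, hmap, hFp, h3]
  rw [hfinal, Filter.mem_map]
  filter_upwards [heq] with y hy
  simp only [Set.mem_preimage, hy]
  exact Set.mem_range_self y

/-- Product rule for manifold derivatives in a Lie group, packaged form. -/
private lemma TJR_mfderiv_mul {f g : G → G} {p : G}
    (hf : MDifferentiableAt 𝓘(ℝ, E) 𝓘(ℝ, E) f p) (hg : MDifferentiableAt 𝓘(ℝ, E) 𝓘(ℝ, E) g p) :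
    TJRD E (fun y => f y * g y) p =
      (TJRD E (fun y => y * g p) (f p)).comp (TJRD E f p) +
      (TJRD E (fun y => f p * y) (g p)).comp (TJRD E g p) := by
  have hmul : MDifferentiableAt (𝓘(ℝ, E).prod 𝓘(ℝ, E)) 𝓘(ℝ, E)
      (fun q : G × G => q.1 * q.2) (f p, g p) :=
    (contMDiff_mul 𝓘(ℝ, E) (⊤ : ℕ∞)).mdifferentiableAt (by simp)
  have hpair : MDifferentiableAt 𝓘(ℝ, E) ((𝓘(ℝ, E)).prod 𝓘(ℝ, E))
      (fun y : G => (f y, g y)) p := hf.prodMk hg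
  set Dmul : E × E →L[ℝ] E :=
    mfderiv (𝓘(ℝ, E).prod 𝓘(ℝ, E)) 𝓘(ℝ, E) (fun q : G × G => q.1 * q.2) (f p, g p)
    with hDmul
  have e2 : TJRD E (fun y => f y * g y) p =
      Dmul.comp ((TJRD E f p).prod (TJRD E g p)) := by
    have h0 := mfderiv_comp p hmul hpair
    rw [hf.mfderiv_prod hg] at h0
    exact h0
  have hl : MDifferentiableAt 𝓘(ℝ, E) ((𝓘(ℝ, E)).prod 𝓘(ℝ, E))
      (fun y : G => (y, g p)) (f p) := mdifferentiableAt_id.prodMk mdifferentiableAt_const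
  have e3 : TJRD E (fun y => y * g p) (f p) =
      Dmul.comp (ContinuousLinearMap.inl ℝ E E) := by
    have h0 := mfderiv_comp (f p) hmul hl
    rw [mfderiv_prod_left] at h0
    exact h0
  have hr : MDifferentiableAt 𝓘(ℝ, E) ((𝓘(ℝ, E)).prod 𝓘(ℝ, E))
      (fun y : G => (f p, y)) (g p) := mdifferentiableAt_const.prodMk mdifferentiableAt_id
  have e4 : TJRD E (fun y => f p * y) (g p) =
      Dmul.comp (ContinuousLinearMap.inr ℝ E E) := by
    have h0 := mfderiv_comp (g p) hmul hr
    rw [mfderiv_prod_right] at h0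
    exact h0
  rw [e2, e3, e4]
  ext v
  simp only [ContinuousLinearMap.comp_apply, ContinuousLinearMap.add_apply,
    ContinuousLinearMap.prod_apply, ContinuousLinearMap.inl_apply, ContinuousLinearMap.inr_apply]
  rw [← map_add, Prod.mk_add_mk, add_zero, zero_add]

/-- If `f` and `g` are mutually inverse smooth maps of `G`, the differential of `f` at any point
is a continuous linear equivalence (with inverse the differential of `g`). -/
private lemma TJR_inv_pair {f g : G → G} (hf : ContMDiff 𝓘(ℝ, E) 𝓘(ℝ, E) (⊤ : ℕ∞) f)
    (hg : ContMDiff 𝓘(ℝ, E) 𝓘(ℝ, E) (⊤ : ℕ∞) g) (h1 : ∀ y, g (f y) = y) (h2 : ∀ y, f (g y) = y)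
    (p : G) :
    ∃ Z : E ≃L[ℝ] E, (Z : E →L[ℝ] E) = TJRD E f p ∧
      (Z.symm : E →L[ℝ] E) = TJRD E g (f p) := by
  have hdf : MDifferentiableAt 𝓘(ℝ, E) 𝓘(ℝ, E) f p := (hf p).mdifferentiableAt (by simp)
  have hdg : MDifferentiableAt 𝓘(ℝ, E) 𝓘(ℝ, E) g (f p) := (hg (f p)).mdifferentiableAt (by simp)
  have c1 : (TJRD E g (f p)).comp (TJRD E f p) = ContinuousLinearMap.id ℝ E := by
    rw [← TJRD_comp hdg hdf]
    have e : g ∘ f = id := funext h1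
    rw [e, TJRD_id]
  have c2 : (TJRD E f p).comp (TJRD E g (f p)) = ContinuousLinearMap.id ℝ E := by
    have hdf' : MDifferentiableAt 𝓘(ℝ, E) 𝓘(ℝ, E) f (g (f p)) :=
      (hf (g (f p))).mdifferentiableAt (by simp)
    have e0 := TJRD_comp hdf' hdg
    have e : f ∘ g = id := funext h2
    rw [e, TJRD_id] at e0
    have e1 : g (f p) = p := h1 p
    rw [e1] at e0
    exact e0.symm
  refine ⟨ContinuousLinearEquiv.equivOfInverse (TJRD E f p) (TJRD E g (f p))
      (fun v => ?_) (fun v => ?_), rfl, rfl⟩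
  · have := DFunLike.congr_fun c1 v
    simpa using this
  · have := DFunLike.congr_fun c2 v
    simpa using this

/-- The differential of inversion at `1` is `-id`. -/
private lemma TJR_mfderiv_inv_one :
    TJRD E (fun y : G => y⁻¹) 1 = -(ContinuousLinearMap.id ℝ E) := by
  have h := TJR_mfderiv_mul (f := fun y : G => y) (g := fun y : G => y⁻¹) (p := (1 : G))
    mdifferentiableAt_id ((contMDiff_inv 𝓘(ℝ, E) (⊤ : ℕ∞)).mdifferentiableAt (by simp))
  simp only [inv_one] at h
  have e0 : (fun y : G => y * y⁻¹) = fun _ => (1 : G) := funext fun y => mul_inv_cancel y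
  have e1 : (fun y : G => y * (1 : G)) = (id : G → G) := funext mul_one
  have e2 : (fun y : G => (1 : G) * y) = (id : G → G) := funext one_mul
  have e3 : (fun y : G => y) = (id : G → G) := rfl
  rw [e0, e1, e2, e3, TJRD_const, TJRD_id, ContinuousLinearMap.id_comp,
    ContinuousLinearMap.id_comp] at h
  exact (eq_neg_of_add_eq_zero_right h.symm)

/-- Continuity of the determinant on endomorphisms. -/
private lemma TJR_det_continuous :
    Continuous fun T : E →L[ℝ] E => LinearMap.det (T : E →ₗ[ℝ] E) := by
  classical
  have hcoe : Continuous fun T : E →L[ℝ] E =>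
      (LinearMap.toMatrix (Module.finBasis ℝ E) (Module.finBasis ℝ E)) (T : E →ₗ[ℝ] E) := by
    haveI : FiniteDimensional ℝ (E →L[ℝ] E) :=
      FiniteDimensional.of_injective (ContinuousLinearMap.coeLM ℝ :
        (E →L[ℝ] E) →ₗ[ℝ] E →ₗ[ℝ] E) ContinuousLinearMap.coe_injective
    exact LinearMap.continuous_of_finiteDimensional
      (((LinearMap.toMatrix (Module.finBasis ℝ E) (Module.finBasis ℝ E)).toLinearMap).comp
        (ContinuousLinearMap.coeLM ℝ))
  have e : (fun T : E →L[ℝ] E => LinearMap.det (T : E →ₗ[ℝ] E)) =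
      fun T : E →L[ℝ] E => ((LinearMap.toMatrix (Module.finBasis ℝ E) (Module.finBasis ℝ E))
        (T : E →ₗ[ℝ] E)).det := by
    funext T
    rw [← LinearMap.det_toMatrix (Module.finBasis ℝ E)]
  rw [e]
  exact hcoe.matrix_det

/-- Continuity of the adjoint-type family of derivatives. -/
private lemma TJR_Ad_continuous :
    Continuous fun x : G => TJRD E (fun y : G => x * y * x⁻¹) (1 : G) := by
  rw [continuous_iff_continuousAt]
  intro x₀
  have hsm : ContMDiffAt (𝓘(ℝ, E).prod 𝓘(ℝ, E)) 𝓘(ℝ, E) (⊤ : ℕ∞)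
      (Function.uncurry fun x y : G => x * y * x⁻¹) (x₀, 1) := by
    have h : ContMDiff (𝓘(ℝ, E).prod 𝓘(ℝ, E)) 𝓘(ℝ, E) (⊤ : ℕ∞)
        (fun q : G × G => q.1 * q.2 * q.1⁻¹) :=
      (contMDiff_fst.mul contMDiff_snd).mul contMDiff_fst.inv
    exact h (x₀, 1)
  have hc := (ContMDiffAt.mfderiv (m := (⊤ : ℕ∞)) (n := (⊤ : ℕ∞))
    (fun x y : G => x * y * x⁻¹) (fun _ : G => (1 : G)) hsm
    contMDiffAt_const (by exact_mod_cast (le_top : (⊤ : ℕ∞) + 1 ≤ ⊤))).continuousAt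
  simp only [mul_one, mul_inv_cancel] at hc
  have c1 : ∀ w : E, (tangentBundleCore 𝓘(ℝ, E) G).coordChange (achart E (1 : G))
      (achart E (1 : G)) (1 : G) w = w := fun w =>
    (tangentBundleCore 𝓘(ℝ, E) G).coordChange_self (achart E (1 : G)) (1 : G)
      (mem_chart_source E (1 : G)) w
  have heqfun : inTangentCoordinates 𝓘(ℝ, E) 𝓘(ℝ, E) (fun _ : G => (1 : G))
      (fun _ : G => (1 : G))
      (fun x : G => mfderiv 𝓘(ℝ, E) 𝓘(ℝ, E) (fun y : G => x * y * x⁻¹) 1) x₀ =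
      fun x : G => TJRD E (fun y : G => x * y * x⁻¹) (1 : G) := by
    funext x
    erw [inTangentCoordinates_eq]
    · ext v
      simp only [ContinuousLinearMap.comp_apply]
      erw [ContinuousLinearMap.comp_apply, c1]
      exact congrArg (TJRD E (fun y : G => x * y * x⁻¹) 1) (c1 v)
    · exact mem_chart_source E (1 : G)
    · exact mem_chart_source E (1 : G)
  rw [heqfun] at hc
  exact hc

/-- The fundamental conjugation identity for derivatives:
`Ad(h·A(h)⁻¹) ∘ DA = Ad(h) ∘ DA ∘ Ad(h⁻¹)`. -/
private lemma TJR_key (A : G ≃* G) (hA : ContMDiff 𝓘(ℝ, E) 𝓘(ℝ, E) (⊤ : ℕ∞) ⇑A) (h : G) :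
    (TJRD E (fun y : G => (h * (A h)⁻¹) * y * (h * (A h)⁻¹)⁻¹) 1).comp (TJRD E (⇑A) 1) =
    (TJRD E (fun y : G => h * y * h⁻¹) 1).comp
      ((TJRD E (⇑A) 1).comp (TJRD E (fun y : G => h⁻¹ * y * h⁻¹⁻¹) 1)) := by
  have hconj : ∀ x : G, ContMDiff 𝓘(ℝ, E) 𝓘(ℝ, E) (⊤ : ℕ∞) (fun y : G => x * y * x⁻¹) :=
    fun x => (contMDiff_const.mul contMDiff_id).mul contMDiff_const
  have hL : TJRD E ((fun y : G => (h * (A h)⁻¹) * y * (h * (A h)⁻¹)⁻¹) ∘ ⇑A) 1 =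
      (TJRD E (fun y : G => (h * (A h)⁻¹) * y * (h * (A h)⁻¹)⁻¹) 1).comp
        (TJRD E (⇑A) 1) := by
    have h0 := TJRD_comp (E := E) (g := fun y : G => (h * (A h)⁻¹) * y * (h * (A h)⁻¹)⁻¹)
      (f := ⇑A) (p := (1 : G))
      ((hconj (h * (A h)⁻¹) (A 1)).mdifferentiableAt (by simp))
      ((hA 1).mdifferentiableAt (by simp))
    rw [map_one] at h0
    exact h0
  have hInner : TJRD E (⇑A ∘ (fun y : G => h⁻¹ * y * h⁻¹⁻¹)) 1 =
      (TJRD E (⇑A) 1).comp (TJRD E (fun y : G => h⁻¹ * y * h⁻¹⁻¹) 1) := by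
    have h0 := TJRD_comp (E := E) (g := ⇑A)
      (f := fun y : G => h⁻¹ * y * h⁻¹⁻¹) (p := (1 : G))
      ((hA ((fun y : G => h⁻¹ * y * h⁻¹⁻¹) 1)).mdifferentiableAt (by simp))
      ((hconj h⁻¹ 1).mdifferentiableAt (by simp))
    simp only [show h⁻¹ * 1 * h⁻¹⁻¹ = 1 by group] at h0
    exact h0
  have hR : TJRD E ((fun y : G => h * y * h⁻¹) ∘ (⇑A ∘ (fun y : G => h⁻¹ * y * h⁻¹⁻¹))) 1 =
      (TJRD E (fun y : G => h * y * h⁻¹) 1).comp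
        ((TJRD E (⇑A) 1).comp (TJRD E (fun y : G => h⁻¹ * y * h⁻¹⁻¹) 1)) := by
    have hB : ContMDiff 𝓘(ℝ, E) 𝓘(ℝ, E) (⊤ : ℕ∞) (⇑A ∘ (fun y : G => h⁻¹ * y * h⁻¹⁻¹)) :=
      hA.comp (hconj h⁻¹)
    have h0 := TJRD_comp (E := E) (g := fun y : G => h * y * h⁻¹)
      (f := ⇑A ∘ (fun y : G => h⁻¹ * y * h⁻¹⁻¹)) (p := (1 : G))
      ((hconj h ((⇑A ∘ (fun y : G => h⁻¹ * y * h⁻¹⁻¹)) 1)).mdifferentiableAt (by simp))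
      ((hB 1).mdifferentiableAt (by simp))
    simp only [Function.comp_apply, show h⁻¹ * 1 * h⁻¹⁻¹ = 1 by group, map_one] at h0
    rw [hInner] at h0
    exact h0
  have hgrp : ((fun y : G => (h * (A h)⁻¹) * y * (h * (A h)⁻¹)⁻¹) ∘ ⇑A) =
      ((fun y : G => h * y * h⁻¹) ∘ (⇑A ∘ (fun y : G => h⁻¹ * y * h⁻¹⁻¹))) := by
    funext y
    simp only [Function.comp_apply, map_mul, map_inv, mul_inv_rev, inv_inv]
    group
  rw [← hL, hgrp, hR]

end Aux

/-- if `G` is a connected Lie group and `A` an automorphism whose derivative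
at the identity does not have `1` as an eigenvalue, then every affine map `g ↦ a·A(g)` has
a fixed point. -/
theorem affine_map_has_fixed_point_of_no_eigenvalue_one
    {E : Type*} [NormedAddCommGroup E] [NormedSpace ℝ E] [FiniteDimensional ℝ E]
    {G : Type*} [TopologicalSpace G] [ChartedSpace E G] [Group G]
    [LieGroup 𝓘(ℝ, E) (⊤ : ℕ∞) G] [ConnectedSpace G]
    (A : G ≃* G)
    (hA : ContMDiff 𝓘(ℝ, E) 𝓘(ℝ, E) (⊤ : ℕ∞) ⇑A)
    (hA' : ContMDiff 𝓘(ℝ, E) 𝓘(ℝ, E) (⊤ : ℕ∞) ⇑A.symm)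
    (hDA : ∀ v : E, mfderiv 𝓘(ℝ, E) 𝓘(ℝ, E) (⇑A) (1 : G) v = v → v = 0)
    (a : G) :
    ∃ g : G, a * A g = g := by
  classical
  have hconj : ∀ x : G, ContMDiff 𝓘(ℝ, E) 𝓘(ℝ, E) (⊤ : ℕ∞) (fun y : G => x * y * x⁻¹) :=
    fun x => (contMDiff_const.mul contMDiff_id).mul contMDiff_const
  have hσ : ∀ x : G, ContMDiff 𝓘(ℝ, E) 𝓘(ℝ, E) (⊤ : ℕ∞) (fun g : G => g * x * (A g)⁻¹) :=
    fun x => (contMDiff_id.mul contMDiff_const).mul hA.inv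
  set S : Set G := Set.range (fun g : G => g * (A g)⁻¹) with hSdef
  have hone : (1 : G) ∈ S := ⟨1, by simp⟩
  have hfwd : ∀ g x : G, x ∈ S → g * x * (A g)⁻¹ ∈ S := by
    rintro g x ⟨k, rfl⟩
    refine ⟨g * k, ?_⟩
    simp [map_mul, mul_inv_rev, mul_assoc]
  have hbwd : ∀ g x : G, g * x * (A g)⁻¹ ∈ S → x ∈ S := by
    rintro g x ⟨k, hk⟩
    refine ⟨g⁻¹ * k, ?_⟩
    simp only at hk
    have hx : x = g⁻¹ * (k * (A k)⁻¹) * A g := by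
      rw [hk]; group
    rw [hx]
    simp only [map_mul, map_inv, mul_inv_rev, inv_inv]
    group
  -- derivative formula for σ_x at 1
  have hDσ : ∀ x : G,
      TJRD E (fun g : G => g * x * (A g)⁻¹) 1 =
        (TJRD E (fun y : G => y * x) 1).comp
          (ContinuousLinearMap.id ℝ E -
            (TJRD E (fun y : G => x * y * x⁻¹) 1).comp (TJRD E (⇑A) 1)) := by
    intro x
    have h1 := TJR_mfderiv_mul (f := fun g : G => g * x) (g := fun g : G => (A g)⁻¹)
      (p := (1 : G)) ((contMDiff_mul_right (n := (⊤ : ℕ∞)) (a := x)).mdifferentiableAt (by simp))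
      ((hA.inv).mdifferentiableAt (by simp))
    simp only [one_mul, map_one, inv_one] at h1
    have e1 : (fun y : G => y * (1 : G)) = (id : G → G) := funext mul_one
    rw [e1, TJRD_id, ContinuousLinearMap.id_comp] at h1
    have hAinv : TJRD E (fun y : G => (A y)⁻¹) 1 = -(TJRD E (⇑A) 1) := by
      have h2 := TJRD_comp (E := E) (g := fun z : G => z⁻¹) (f := ⇑A) (p := (1 : G))
        (((contMDiff_inv 𝓘(ℝ, E) (⊤ : ℕ∞)) (A 1)).mdifferentiableAt (by simp))
        ((hA 1).mdifferentiableAt (by simp))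
      rw [map_one] at h2
      rw [show (fun y : G => (A y)⁻¹) = (fun z : G => z⁻¹) ∘ ⇑A from rfl, h2,
        TJR_mfderiv_inv_one, ContinuousLinearMap.neg_comp, ContinuousLinearMap.id_comp]
    have hlam : TJRD E (fun y : G => x * y) 1 =
        (TJRD E (fun y : G => y * x) 1).comp (TJRD E (fun y : G => x * y * x⁻¹) 1) := by
      have hcomp : (fun y : G => x * y) = (fun y : G => y * x) ∘ (fun y : G => x * y * x⁻¹) :=
        funext fun y => by simp only [Function.comp_apply]; group
      have h3 := TJRD_comp (E := E) (g := fun y : G => y * x)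
        (f := fun y : G => x * y * x⁻¹) (p := (1 : G))
        ((contMDiff_mul_right (n := (⊤ : ℕ∞)) (a := x) ((fun y : G => x * y * x⁻¹) 1)).mdifferentiableAt (by simp))
        ((hconj x 1).mdifferentiableAt (by simp))
      rw [← hcomp] at h3
      simp only [mul_one, mul_inv_cancel] at h3
      exact h3
    rw [hAinv, hlam] at h1
    rw [h1]
    ext v
    simp only [ContinuousLinearMap.comp_apply, ContinuousLinearMap.add_apply,
      ContinuousLinearMap.sub_apply, ContinuousLinearMap.id_apply,
      ContinuousLinearMap.neg_apply, map_neg, map_sub]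
    abel
  -- determinant invariance on S
  have hQS : ∀ x ∈ S,
      LinearMap.det (ContinuousLinearMap.toLinearMap (ContinuousLinearMap.id ℝ E -
        (TJRD E (fun y : G => x * y * x⁻¹) 1).comp (TJRD E (⇑A) 1))) =
      LinearMap.det (ContinuousLinearMap.toLinearMap (ContinuousLinearMap.id ℝ E - TJRD E (⇑A) 1)) := by
    rintro x ⟨h, rfl⟩
    show LinearMap.det (ContinuousLinearMap.toLinearMap (ContinuousLinearMap.id ℝ E -
        (TJRD E (fun y : G => (h * (A h)⁻¹) * y * (h * (A h)⁻¹)⁻¹) 1).comp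
          (TJRD E (⇑A) 1))) =
      LinearMap.det (ContinuousLinearMap.toLinearMap (ContinuousLinearMap.id ℝ E - TJRD E (⇑A) 1))
    obtain ⟨Zc, hZc, hZc'⟩ := TJR_inv_pair (hconj h) (hconj h⁻¹)
      (fun y => by group) (fun y => by group) 1
    simp only [show h * 1 * h⁻¹ = 1 by group] at hZc'
    have hkey := TJR_key A hA h
    have hQeq : (ContinuousLinearMap.id ℝ E -
        (TJRD E (fun y : G => (h * (A h)⁻¹) * y * (h * (A h)⁻¹)⁻¹) 1).comp
          (TJRD E (⇑A) 1)) =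
        (Zc : E →L[ℝ] E).comp ((ContinuousLinearMap.id ℝ E - TJRD E (⇑A) 1).comp
            (Zc.symm : E →L[ℝ] E)) := by
      ext v
      simp only [ContinuousLinearMap.comp_apply, ContinuousLinearMap.sub_apply,
        ContinuousLinearMap.id_apply, map_sub]
      have hcan : (Zc : E →L[ℝ] E) ((Zc.symm : E →L[ℝ] E) v) = v := Zc.apply_symm_apply v
      rw [hcan]
      have hk := DFunLike.congr_fun hkey v
      simp only [ContinuousLinearMap.comp_apply] at hk
      rw [hk, ← hZc, ← hZc']
    rw [hQeq]
    have hassoc : ContinuousLinearMap.toLinearMap ((Zc : E →L[ℝ] E).comp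
        ((ContinuousLinearMap.id ℝ E - TJRD E (⇑A) 1).comp (Zc.symm : E →L[ℝ] E))) =
        (Zc.toLinearEquiv : E →ₗ[ℝ] E) ∘ₗ
          ContinuousLinearMap.toLinearMap (ContinuousLinearMap.id ℝ E - TJRD E (⇑A) 1) ∘ₗ
          (Zc.toLinearEquiv.symm : E →ₗ[ℝ] E) := rfl
    rw [hassoc, LinearMap.det_conj]
  -- continuity of the determinant function
  have hdetcont : Continuous fun x : G =>
      LinearMap.det (ContinuousLinearMap.toLinearMap (ContinuousLinearMap.id ℝ E -
        (TJRD E (fun y : G => x * y * x⁻¹) 1).comp (TJRD E (⇑A) 1))) :=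
    TJR_det_continuous.comp (continuous_const.sub (TJR_Ad_continuous.clm_comp continuous_const))
  -- the determinant at 1 is nonzero
  have hdet1 : LinearMap.det (ContinuousLinearMap.toLinearMap (ContinuousLinearMap.id ℝ E -
      TJRD E (⇑A) 1)) ≠ 0 := by
    have hinj : Function.Injective
        (ContinuousLinearMap.toLinearMap (ContinuousLinearMap.id ℝ E - TJRD E (⇑A) 1)) := by
      intro v w hvw
      simp only [ContinuousLinearMap.coe_coe, ContinuousLinearMap.sub_apply,
        ContinuousLinearMap.id_apply] at hvw
      have h0 : mfderiv 𝓘(ℝ, E) 𝓘(ℝ, E) (⇑A) 1 (v - w) = v - w := by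
        have : TJRD E (⇑A) 1 (v - w) = v - w := by
          rw [map_sub]
          exact (sub_eq_sub_iff_sub_eq_sub.mp hvw).symm
        exact this
      exact sub_eq_zero.mp (hDA (v - w) h0)
    have hco : (↑(LinearEquiv.ofInjectiveEndo _ hinj) : E →ₗ[ℝ] E) =
        ContinuousLinearMap.toLinearMap (ContinuousLinearMap.id ℝ E - TJRD E (⇑A) 1) := rfl
    rw [← hco]
    exact (LinearEquiv.isUnit_det' _).ne_zero
  -- determinant is constant on the closure of S
  have hdetclos : ∀ x ∈ closure S,
      LinearMap.det (ContinuousLinearMap.toLinearMap (ContinuousLinearMap.id ℝ E -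
        (TJRD E (fun y : G => x * y * x⁻¹) 1).comp (TJRD E (⇑A) 1))) =
      LinearMap.det (ContinuousLinearMap.toLinearMap (ContinuousLinearMap.id ℝ E - TJRD E (⇑A) 1)) := by
    intro x hx
    have hcl : IsClosed {x : G |
        LinearMap.det ((ContinuousLinearMap.id ℝ E -
          (TJRD E (fun y : G => x * y * x⁻¹) 1).comp (TJRD E (⇑A) 1)) : E →ₗ[ℝ] E) =
        LinearMap.det (ContinuousLinearMap.toLinearMap (ContinuousLinearMap.id ℝ E - TJRD E (⇑A) 1))} :=
      isClosed_eq hdetcont continuous_const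
    exact closure_minimal hQS hcl hx
  -- for x in the closure of S, the range of σ_x is a neighborhood of x
  have hnbhd : ∀ x ∈ closure S,
      Set.range (fun g : G => g * x * (A g)⁻¹) ∈ 𝓝 x := by
    intro x hx
    have hdet : LinearMap.det (ContinuousLinearMap.toLinearMap (ContinuousLinearMap.id ℝ E -
        (TJRD E (fun y : G => x * y * x⁻¹) 1).comp (TJRD E (⇑A) 1))) ≠ 0 := by
      rw [hdetclos x hx]; exact hdet1
    obtain ⟨Zr, hZr, -⟩ := TJR_inv_pair (E := E) (f := fun y : G => y * x)
      (g := fun y : G => y * x⁻¹) (contMDiff_mul_right (a := x))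
      (contMDiff_mul_right (a := x⁻¹)) (fun y => by group) (fun y => by group) 1
    set Q : E →L[ℝ] E := ContinuousLinearMap.id ℝ E -
      (TJRD E (fun y : G => x * y * x⁻¹) 1).comp (TJRD E (⇑A) 1) with hQdef
    let QE : E ≃L[ℝ] E :=
      (LinearMap.equivOfDetNeZero (ContinuousLinearMap.toLinearMap Q) hdet).toContinuousLinearEquiv
    have hQE : ∀ v : E, QE v = Q v := fun v => rfl
    have hZ : ((QE.trans Zr : E ≃L[ℝ] E) : E →L[ℝ] E) =
        TJRD E (fun g : G => g * x * (A g)⁻¹) 1 := by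
      rw [hDσ x, ← hQdef]
      ext v
      simp only [ContinuousLinearMap.coe_coe, ContinuousLinearEquiv.coe_coe,
        ContinuousLinearEquiv.trans_apply, ContinuousLinearMap.comp_apply]
      rw [hQE v]
      have h5 := DFunLike.congr_fun hZr (Q v)
      simpa using h5
    have hnb := TJR_range_mem_nhds (hσ x) 1 (QE.trans Zr) hZ
    have hpt : (1 : G) * x * (A 1)⁻¹ = x := by
      simp
    rwa [hpt] at hnb
  -- S is open
  have hopen : IsOpen S := by
    rw [isOpen_iff_mem_nhds]
    intro x hx
    refine Filter.mem_of_superset (hnbhd x (subset_closure hx)) ?_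
    rintro y ⟨g, rfl⟩
    exact hfwd g x hx
  -- S is closed
  have hclosed : IsClosed S := by
    refine isClosed_of_closure_subset ?_
    intro x hx
    rcases mem_closure_iff_nhds.mp hx _ (hnbhd x hx) with ⟨y, hyr, hyS⟩
    rcases hyr with ⟨g, rfl⟩
    exact hbwd g x hyS
  have huniv : S = Set.univ := IsClopen.eq_univ ⟨hclosed, hopen⟩ ⟨1, hone⟩
  have haS : a ∈ S := by rw [huniv]; exact Set.mem_univ a
  rcases haS with ⟨g, hg⟩
  refine ⟨g, ?_⟩
  simp only at hg
  rw [← hg]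
  group
end

section
/- Let G be a topological group and H₂ ⊆ H₁ ⊆ G closed subgroups. Then G/H₂ is compact if and only if both H₁/H₂ and G/H₁ are compact. -/
open Set Topology Pointwise

/-- If `G ⧸ N` is compact and `G` is locally compact, there is a compact set of
representatives for the cosets. -/
private lemma exists_compact_cover_quotient {G : Type*} [Group G] [TopologicalSpace G]
    [IsTopologicalGroup G] [LocallyCompactSpace G] (N : Subgroup G)
    (hc : CompactSpace (G ⧸ N)) :
    ∃ K : Set G, IsCompact K ∧ ∀ g : G, ∃ k ∈ K, k⁻¹ * g ∈ N := by
  haveI := hc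
  choose C hCc hCn using fun g : G => exists_compact_mem_nhds g
  obtain ⟨t, ht⟩ := (isCompact_univ (X := G ⧸ N)).elim_finite_subcover
    (fun g : G => QuotientGroup.mk '' interior (C g))
    (fun g => QuotientGroup.isOpenMap_coe _ isOpen_interior)
    (by
      rintro x -
      obtain ⟨g, rfl⟩ := QuotientGroup.mk_surjective x
      exact mem_iUnion.2 ⟨g, ⟨g, mem_interior_iff_mem_nhds.2 (hCn g), rfl⟩⟩)
  refine ⟨⋃ g ∈ t, C g, t.finite_toSet.isCompact_biUnion fun g _ => hCc g, fun g => ?_⟩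
  have hg : (QuotientGroup.mk g : G ⧸ N) ∈ ⋃ i ∈ t, QuotientGroup.mk '' interior (C i) :=
    ht (mem_univ _)
  obtain ⟨i, hi, k, hk, hkg⟩ := by simpa using hg
  exact ⟨k, mem_biUnion hi (interior_subset hk), QuotientGroup.eq.mp hkg⟩

/-- for closed subgroups `H₂ ⊆ H₁` of a locally compact Hausdorff topological
group `G`, the coset space `G/H₂` is compact iff both `H₁/H₂` and `G/H₁` are compact. -/
theorem cocompact_tower
    {G : Type*} [Group G] [TopologicalSpace G] [IsTopologicalGroup G]
    [LocallyCompactSpace G] [T2Space G]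
    (H₁ H₂ : Subgroup G) (h21 : H₂ ≤ H₁)
    (h1c : IsClosed (H₁ : Set G)) (h2c : IsClosed (H₂ : Set G)) :
    CompactSpace (G ⧸ H₂) ↔
      (CompactSpace (H₁ ⧸ H₂.subgroupOf H₁) ∧ CompactSpace (G ⧸ H₁)) := by
  constructor
  · intro hc
    constructor
    · -- `H₁ ⧸ H₂.subgroupOf H₁` is compact: it embeds as a closed subset of `G ⧸ H₂`.
      let e : H₁ ⧸ H₂.subgroupOf H₁ → G ⧸ H₂ :=
        Quotient.map' Subtype.val (fun a b hab => by
          rw [QuotientGroup.leftRel_apply] at hab ⊢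
          simpa [Subgroup.mem_subgroupOf] using hab)
      have ecoe : ∀ h : H₁, e (QuotientGroup.mk h) = QuotientGroup.mk (h : G) := fun _ => rfl
      have hinj : Function.Injective e := by
        intro a b hab
        induction a using Quotient.inductionOn'
        induction b using Quotient.inductionOn'
        rename_i a b
        rw [ecoe, ecoe] at hab
        rw [QuotientGroup.eq] at hab ⊢
        simpa [Subgroup.mem_subgroupOf] using hab
      have hind : Topology.IsInducing e := by
        refine ⟨TopologicalSpace.ext_iff.mpr fun U => ?_⟩
        rw [isOpen_induced_iff]
        constructor
        · intro hU
          have hU' : IsOpen ((QuotientGroup.mk : H₁ → H₁ ⧸ H₂.subgroupOf H₁) ⁻¹' U) :=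
            (QuotientGroup.isQuotientMap_mk _).isOpen_preimage.mpr hU
          obtain ⟨W, hW, hWU⟩ := isOpen_induced_iff.mp hU'
          refine ⟨QuotientGroup.mk '' W, QuotientGroup.isOpenMap_coe _ hW, ?_⟩
          ext x
          induction x using Quotient.inductionOn'
          rename_i h
          show e (QuotientGroup.mk h) ∈ QuotientGroup.mk '' W ↔ QuotientGroup.mk h ∈ U
          rw [ecoe]
          constructor
          · rintro ⟨w, hw, hwh⟩
            have hmem : w⁻¹ * (h : G) ∈ H₂ := QuotientGroup.eq.mp hwh
            have hwH1 : w ∈ H₁ := by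
              have : (w⁻¹ * (h : G))⁻¹ ∈ H₁ := H₁.inv_mem (h21 hmem)
              simpa using H₁.mul_mem h.2 this
            have hwin : (⟨w, hwH1⟩ : H₁) ∈ (Subtype.val ⁻¹' W : Set H₁) := hw
            rw [hWU] at hwin
            have : (QuotientGroup.mk (⟨w, hwH1⟩ : H₁) : H₁ ⧸ H₂.subgroupOf H₁)
                = QuotientGroup.mk h := by
              rw [QuotientGroup.eq]
              simpa [Subgroup.mem_subgroupOf] using hmem
            rw [Set.mem_preimage] at hwin
            rwa [this] at hwin
          · intro hh
            have hmemW : h ∈ Subtype.val ⁻¹' W := by rw [hWU]; exact hh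
            exact ⟨(h : G), hmemW, rfl⟩
        · rintro ⟨V, hV, rfl⟩
          have hcont : Continuous e := continuous_subtype_val.quotient_map' _
          exact hcont.isOpen_preimage V hV
      have hrange : Set.range e = QuotientGroup.mk '' (H₁ : Set G) := by
        ext x
        constructor
        · rintro ⟨y, rfl⟩
          induction y using Quotient.inductionOn'
          rename_i h
          exact ⟨(h : G), h.2, (ecoe h).symm⟩
        · rintro ⟨g, hg, rfl⟩
          exact ⟨QuotientGroup.mk ⟨g, hg⟩, ecoe _⟩
      have hclosed : IsClosed (Set.range e) := by
        rw [hrange, ← (QuotientGroup.isQuotientMap_mk H₂).isClosed_preimage]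
        have : (QuotientGroup.mk : G → G ⧸ H₂) ⁻¹' (QuotientGroup.mk '' (H₁ : Set G))
            = (H₁ : Set G) := by
          ext g
          constructor
          · rintro ⟨a, ha, hag⟩
            have hmem : a⁻¹ * g ∈ H₂ := QuotientGroup.eq.mp hag
            simpa using H₁.mul_mem ha (h21 hmem)
          · intro hg
            exact ⟨g, hg, rfl⟩
        rwa [this]
      have hembed : Topology.IsEmbedding e := ⟨hind, hinj⟩
      rw [← isCompact_univ_iff, hembed.isCompact_iff, Set.image_univ, hrange]
      rw [← hrange]
      exact hclosed.isCompact
    · -- `G ⧸ H₁` is compact: continuous surjective image of `G ⧸ H₂`.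
      let p : G ⧸ H₂ → G ⧸ H₁ :=
        Quotient.map' id (fun a b hab => by
          rw [QuotientGroup.leftRel_apply] at hab ⊢
          exact h21 hab)
      have hcont : Continuous p := continuous_id.quotient_map' _
      have hsurj : Function.Surjective p := fun x => by
        obtain ⟨g, rfl⟩ := QuotientGroup.mk_surjective x
        exact ⟨QuotientGroup.mk g, rfl⟩
      rw [← isCompact_univ_iff]
      have himg : (Set.univ : Set (G ⧸ H₁)) = p '' Set.univ := by
        rw [Set.image_univ, Set.range_eq_univ.mpr hsurj]
      rw [himg]
      exact isCompact_univ.image hcont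
  · rintro ⟨hA, hB⟩
    haveI : LocallyCompactSpace H₁ := h1c.locallyCompactSpace
    obtain ⟨K, hKc, hK⟩ := exists_compact_cover_quotient H₁ hB
    obtain ⟨L, hLc, hL⟩ := exists_compact_cover_quotient (H₂.subgroupOf H₁) hA
    rw [← isCompact_univ_iff]
    have huniv : (Set.univ : Set (G ⧸ H₂))
        = QuotientGroup.mk '' (K * (Subtype.val '' L)) := by
      ext x
      simp only [mem_univ, true_iff]
      obtain ⟨g, rfl⟩ := QuotientGroup.mk_surjective x
      obtain ⟨k, hk, hkg⟩ := hK g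
      obtain ⟨l, hl, hlg⟩ := hL ⟨k⁻¹ * g, hkg⟩
      refine ⟨k * (l : G), Set.mul_mem_mul hk ⟨l, hl, rfl⟩, ?_⟩
      rw [QuotientGroup.eq]
      have := Subgroup.mem_subgroupOf.mp hlg
      simpa [mul_assoc, mul_inv_rev] using this
    rw [huniv]
    exact ((hKc.mul (hLc.image continuous_subtype_val)).image continuous_quot_mk)
end
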